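/- Define s : ℕ → List ℕ by s(0) = [0] and s(k+1) = (s(k) ++ ⋯ ++ s(k), p copies concatenated) with the last entry incremented by 1, for a fixed prime p. Then s(k) has length p^k and for every i with 1 ≤ i ≤ p^k, the i-th entry of s(k) equals v_p(i). -/

import Mathlib

/-- Increment the last entry of a list by 1 (identity on the empty list). -/
def incLast (l : List ℕ) : List ℕ := l.dropLast ++ (l.getLast?.map (· + 1)).toList

/-- The sieve sequence for `p`: start with `[0]`; at each step concatenate `p` copies
and increment the final entry. -/
def sieveSeq (p : ℕ) : ℕ → List ℕ
  | 0 => [0]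
  | k + 1 => incLast (List.flatten (List.replicate p (sieveSeq p k)))

lemma incLast_eq (l : List ℕ) (h : l ≠ []) :
    incLast l = l.dropLast ++ [l.getLast h + 1] := by
  rw [incLast, List.getLast?_eq_getLast_of_ne_nil h]
  rfl

lemma length_incLast (l : List ℕ) (h : l ≠ []) : (incLast l).length = l.length := by
  have hl : 0 < l.length := List.length_pos_iff.mpr h
  rw [incLast_eq l h]
  simp only [List.length_append, List.length_dropLast, List.length_singleton]
  omega

lemma getD_incLast_of_lt (l : List ℕ) (h : l ≠ []) (j : ℕ) (hj : j < l.length - 1) (d : ℕ) :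
    (incLast l).getD j d = l.getD j d := by
  rw [incLast_eq l h, List.getD_append _ _ _ _ (by simp [List.length_dropLast]; omega)]
  have h1 : j < l.dropLast.length := by simp [List.length_dropLast]; omega
  have h2 : j < l.length := by omega
  rw [List.getD_eq_getElem _ _ h1, List.getD_eq_getElem _ _ h2, List.getElem_dropLast]

lemma getD_incLast_last (l : List ℕ) (h : l ≠ []) (d : ℕ) :
    (incLast l).getD (l.length - 1) d = l.getD (l.length - 1) d + 1 := by
  have hl : 0 < l.length := List.length_pos_iff.mpr h
  rw [incLast_eq l h, List.getD_append_right _ _ _ _ (by simp [List.length_dropLast])]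
  have h0 : l.length - 1 - l.dropLast.length = 0 := by
    simp [List.length_dropLast]
  rw [h0]
  have h2 : l.getD (l.length - 1) d = l.getLast h := by
    rw [List.getD_eq_getElem _ _ (by omega), List.getLast_eq_getElem]
  rw [h2]
  rfl

lemma length_flatten_replicate (q : ℕ) (l : List ℕ) :
    (List.flatten (List.replicate q l)).length = q * l.length := by
  simp [List.length_flatten, List.map_replicate, List.sum_replicate, smul_eq_mul]

lemma getD_flatten_replicate (l : List ℕ) (d : ℕ) :
    ∀ q m r, m < q → r < l.length →
      (List.flatten (List.replicate q l)).getD (m * l.length + r) d = l.getD r d := by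
  intro q
  induction q with
  | zero => intro m r hm; omega
  | succ q ih =>
    intro m r hm hr
    rw [List.replicate_succ, List.flatten_cons]
    match m with
    | 0 =>
      simp only [Nat.zero_mul, Nat.zero_add]
      exact List.getD_append _ _ _ _ hr
    | m + 1 =>
      have : (m + 1) * l.length + r = l.length + (m * l.length + r) := by ring
      rw [this, List.getD_append_right _ _ _ _ (by omega)]
      simp only [Nat.add_sub_cancel_left]
      exact ih m r (by omega) hr

theorem sieveSeq_eq_padicValNat (p : ℕ) (hp : p.Prime) (k : ℕ) :
    (sieveSeq p k).length = p ^ k ∧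
      ∀ i : ℕ, 1 ≤ i → i ≤ p ^ k → (sieveSeq p k).getD (i - 1) 0 = padicValNat p i := by
  haveI : Fact p.Prime := ⟨hp⟩
  have hp1 : 1 < p := hp.one_lt
  induction k with
  | zero =>
    constructor
    · rfl
    · intro i h1 h2
      have h2' : i ≤ 1 := by simpa using h2
      have : i = 1 := by omega
      subst this
      simp [sieveSeq, padicValNat.one]
  | succ k ih =>
    obtain ⟨hlen, hval⟩ := ih
    set l := sieveSeq p k with hl
    have hn : 0 < p ^ k := Nat.pow_pos (by omega)
    have hlne : l ≠ [] := by
      apply List.length_pos_iff.mp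
      rw [hlen]; exact hn
    have hFlen : (List.flatten (List.replicate p l)).length = p ^ (k + 1) := by
      rw [length_flatten_replicate, hlen, pow_succ, mul_comm]
    have hFne : (List.flatten (List.replicate p l)) ≠ [] := by
      apply List.length_pos_iff.mp
      rw [hFlen]
      exact Nat.pow_pos (by omega)
    have hmul : (p - 1) * p ^ k + p ^ k = p * p ^ k := by
      calc (p - 1) * p ^ k + p ^ k = (p - 1 + 1) * p ^ k := by ring
        _ = p * p ^ k := by rw [Nat.sub_add_cancel (by omega)]
    have hidx : (List.flatten (List.replicate p l)).length - 1
        = (p - 1) * l.length + (p ^ k - 1) := by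
      rw [hFlen, hlen, pow_succ, mul_comm]
      omega
    constructor
    · show (incLast _).length = _
      rw [length_incLast _ hFne, hFlen]
    · intro i h1 h2
      show (incLast _).getD (i - 1) 0 = _
      rcases eq_or_lt_of_le h2 with heq | hlt
      · -- i = p ^ (k + 1)
        rw [heq]
        have hidx2 : p ^ (k + 1) - 1 = (List.flatten (List.replicate p l)).length - 1 := by
          rw [hFlen]
        rw [hidx2, getD_incLast_last _ hFne, hidx,
          getD_flatten_replicate l 0 p (p - 1) (p ^ k - 1) (by omega) (by rw [hlen]; omega)]
        have hv := hval (p ^ k) hn (le_refl _)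
        rw [hv, padicValNat.prime_pow, padicValNat.prime_pow]
      · -- i < p ^ (k + 1)
        have hilt : i - 1 < (List.flatten (List.replicate p l)).length - 1 := by
          rw [hFlen]; omega
        rw [getD_incLast_of_lt _ hFne _ hilt]
        set n := p ^ k with hnn
        set m := (i - 1) / n with hm
        set r := (i - 1) % n with hr
        have hdm : i - 1 = m * n + r := by
          rw [hm, hr, Nat.mul_comm]
          exact (Nat.div_add_mod _ _).symm
        have hrlt : r < n := Nat.mod_lt _ hn
        have hmlt : m < p := by
          have hpn : i - 1 < p * n := by rw [← pow_succ']; omega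
          by_contra h
          push_neg at h
          have : p * n ≤ m * n := Nat.mul_le_mul_right n h
          omega
        clear_value n m r
        rw [hdm, ← hlen, getD_flatten_replicate l 0 p m r hmlt (by rw [hlen]; exact hrlt)]
        have hval_r := hval (r + 1) (by omega) (by omega)
        simp only [Nat.add_sub_cancel] at hval_r
        rw [hval_r]
        have hi_eq : i = m * n + (r + 1) := by omega
        rcases eq_or_lt_of_le (Nat.succ_le_of_lt hrlt) with he' | hlt2
        · -- r + 1 = n
          have he : r + 1 = n := he'
          have hmp : m + 1 < p := by
            by_contra h
            push_neg at h
            have hm1 : m = p - 1 := by omega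
            have hip : i = p * n := by
              rw [hi_eq, he, hm1]
              exact hmul
            have hip' : i = p ^ (k + 1) := by rw [hip, hnn, ← pow_succ']
            omega
          have hi2 : i = (m + 1) * n := by rw [hi_eq, he]; ring
          rw [he, hi2, hnn, padicValNat.mul (Nat.succ_ne_zero m) (by positivity),
            padicValNat.prime_pow, padicValNat.eq_zero_of_not_dvd, zero_add]
          intro hdvd
          have := Nat.le_of_dvd (by omega) hdvd
          omega
        · -- r + 1 < n
          set v := padicValNat p (r + 1) with hv
          have hdvd_v : p ^ v ∣ r + 1 := pow_padicValNat_dvd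
          clear_value v
          have hvk : v < k := by
            have hle : p ^ v ≤ r + 1 := Nat.le_of_dvd (by omega) hdvd_v
            have : p ^ v < p ^ k := by omega
            exact (Nat.pow_lt_pow_iff_right hp1).mp this
          have hine : i ≠ 0 := by omega
          refine le_antisymm ?_ ?_
          · rw [← padicValNat_dvd_iff_le hine, hi_eq]
            exact Dvd.dvd.add (Dvd.dvd.mul_left ((pow_dvd_pow p hvk.le).trans
              (by rw [hnn])) m) hdvd_v
          · by_contra h
            push_neg at h
            have h2 : p ^ (v + 1) ∣ i := (padicValNat_dvd_iff_le hine).mpr h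
            have h3 : p ^ (v + 1) ∣ m * n := Dvd.dvd.mul_left
              ((pow_dvd_pow p (show v + 1 ≤ k by omega)).trans (by rw [hnn])) m
            have h4 : p ^ (v + 1) ∣ r + 1 := by
              have h5 := Nat.dvd_sub h2 h3
              rwa [hi_eq, Nat.add_sub_cancel_left] at h5
            have := (padicValNat_dvd_iff_le (by omega)).mp h4
            omega
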